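/- arXiv:2410.23594 — 3 statements merged into one kernel-verified Lean document; each statement's English description precedes it below -/
import Mathlib

section
/- If the softmax of (z_1,…,z_N) has maximum entry at most τ < 1, then the gap between the largest and second-largest inputs satisfies z_max - z_next ≤ log(τ(N-1)/(1-τ)). -/
open Finset Real

/-- If every entry of the softmax of `(z 1, …, z N)` is at most `τ < 1`, then the gap
between the largest input and the second-largest input (with multiplicity) is at most
`log (τ (N-1) / (1 - τ))`. -/
theorem softmax_max_le_imp_gap_le {N : ℕ} (hN : 2 ≤ N) (z : Fin N → ℝ)
    (τ : ℝ) (hτ : τ ∈ Set.Ioo (0 : ℝ) 1)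
    (hsoft : ∀ i, Real.exp (z i) / ∑ k, Real.exp (z k) ≤ τ)
    (i : Fin N) (hi : ∀ j, z j ≤ z i) :
    z i - (Finset.univ.erase i).sup' (by
        apply Finset.card_pos.mp
        rw [Finset.card_erase_of_mem (Finset.mem_univ i)]
        simp only [Finset.card_univ, Fintype.card_fin]
        omega) z ≤
      Real.log (τ * (N - 1) / (1 - τ)) := by
  obtain ⟨hτ0, hτ1⟩ := hτ
  have hne : ((Finset.univ : Finset (Fin N)).erase i).Nonempty := by
    apply Finset.card_pos.mp
    rw [Finset.card_erase_of_mem (Finset.mem_univ i)]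
    simp only [Finset.card_univ, Fintype.card_fin]
    omega
  set M := ((Finset.univ : Finset (Fin N)).erase i).sup' hne z with hM
  have hSpos : 0 < ∑ k, Real.exp (z k) :=
    Finset.sum_pos (fun k _ => Real.exp_pos _) ⟨i, Finset.mem_univ i⟩
  have h1 : Real.exp (z i) ≤ τ * ∑ k, Real.exp (z k) := by
    have := hsoft i
    rw [div_le_iff₀ hSpos] at this
    linarith
  have hsplit : (∑ k, Real.exp (z k)) =
      Real.exp (z i) + ∑ k ∈ (Finset.univ : Finset (Fin N)).erase i, Real.exp (z k) := by
    rw [← Finset.add_sum_erase _ _ (Finset.mem_univ i)]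
  have h2 : ∑ k ∈ (Finset.univ : Finset (Fin N)).erase i, Real.exp (z k)
      ≤ (N - 1 : ℝ) * Real.exp M := by
    have hcard : (((Finset.univ : Finset (Fin N)).erase i).card : ℝ) = (N - 1 : ℝ) := by
      rw [Finset.card_erase_of_mem (Finset.mem_univ i)]
      simp only [Finset.card_univ, Fintype.card_fin]
      have : (1:ℕ) ≤ N := by omega
      push_cast [this]
      ring
    calc ∑ k ∈ (Finset.univ : Finset (Fin N)).erase i, Real.exp (z k)
        ≤ ∑ _k ∈ (Finset.univ : Finset (Fin N)).erase i, Real.exp M := by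
          apply Finset.sum_le_sum
          intro k hk
          exact Real.exp_le_exp.mpr (Finset.le_sup' z hk)
      _ = (N - 1 : ℝ) * Real.exp M := by rw [Finset.sum_const, nsmul_eq_mul, hcard]
  have h3 : (1 - τ) * Real.exp (z i) ≤ τ * ((N - 1 : ℝ) * Real.exp M) := by
    nlinarith [Real.exp_pos (z i)]
  have hN1 : (0:ℝ) < (N - 1 : ℝ) := by
    have : (2:ℝ) ≤ (N:ℝ) := by exact_mod_cast hN
    linarith
  have hrhs : 0 < τ * (N - 1 : ℝ) / (1 - τ) := div_pos (by positivity) (by linarith)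
  have h4 : Real.exp (z i) / Real.exp M ≤ τ * (N - 1 : ℝ) / (1 - τ) := by
    rw [div_le_div_iff₀ (Real.exp_pos M) (by linarith)]
    nlinarith [Real.exp_pos M]
  calc z i - M = Real.log (Real.exp (z i) / Real.exp M) := by
        rw [Real.log_div (Real.exp_ne_zero _) (Real.exp_ne_zero _), Real.log_exp, Real.log_exp]
    _ ≤ Real.log (τ * (N - 1) / (1 - τ)) :=
        Real.log_le_log (div_pos (Real.exp_pos _) (Real.exp_pos _)) h4
end

section
/- Softmax weight concentration bound: if x ∼ (1/N)Σ_i N(t y^i, (1-t)² I_d) with pairwise distances ||y^i - y^j|| ≥ M, then the probability that the maximum softmax weight max(w_t(x)) is at most τ < 1 is bounded by (1/√(2π))·((1-t)/t)·(1/M)·log(τ(N-1)/(1-τ))·N(N-1). -/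
open MeasureTheory ProbabilityTheory Real
open scoped ENNReal NNReal

set_option maxHeartbeats 1000000

/-- The standard Gaussian measure `N(0, I_d)` on `ℝ^d`. -/
noncomputable def stdGaussian (d : ℕ) : Measure (EuclideanSpace ℝ (Fin d)) :=
  (Measure.pi fun _ : Fin d => gaussianReal 0 1).map
    (MeasurableEquiv.toLp 2 (Fin d → ℝ))

/-- The Gaussian `N(m, s² I_d)` on `ℝ^d`, as the law of `m + s • z` for `z ∼ N(0, I_d)`. -/
noncomputable def isoGaussian {d : ℕ} (m : EuclideanSpace ℝ (Fin d)) (s : ℝ) :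
    Measure (EuclideanSpace ℝ (Fin d)) :=
  (stdGaussian d).map (fun z => m + s • z)

lemma gaussianPDFReal_conv (v₁ v₂ : ℝ≥0) (hv₁ : v₁ ≠ 0) (hv₂ : v₂ ≠ 0) (u x : ℝ) :
    gaussianPDFReal 0 v₁ x * gaussianPDFReal 0 v₂ (u - x) =
      gaussianPDFReal 0 (v₁ + v₂) u *
        gaussianPDFReal ((v₁ : ℝ) * u / ((v₁ : ℝ) + v₂)) (v₁ * v₂ / (v₁ + v₂)) x := by
  have ha : (0:ℝ) < v₁ := lt_of_le_of_ne (v₁.coe_nonneg) (by exact_mod_cast (Ne.symm hv₁))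
  have hb : (0:ℝ) < v₂ := lt_of_le_of_ne (v₂.coe_nonneg) (by exact_mod_cast (Ne.symm hv₂))
  have hab : (0:ℝ) < (v₁:ℝ) + v₂ := by linarith
  have hw : ((v₁ * v₂ / (v₁ + v₂) : ℝ≥0) : ℝ) = (v₁:ℝ) * v₂ / ((v₁:ℝ) + v₂) := by
    push_cast; ring
  have hpi : (0:ℝ) < 2 * π := by positivity
  simp only [gaussianPDFReal]
  rw [mul_mul_mul_comm, ← Real.exp_add, mul_mul_mul_comm, ← Real.exp_add]
  congr 1
  · rw [← mul_inv, ← mul_inv, ← Real.sqrt_mul (by positivity), ← Real.sqrt_mul (by positivity)]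
    congr 1
    push_cast [hw]
    field_simp
  · rw [hw]
    congr 1
    push_cast
    field_simp
    ring

lemma gaussianReal_conv (v₁ v₂ : ℝ≥0) :
    ((gaussianReal 0 v₁).prod (gaussianReal 0 v₂)).map (fun p : ℝ × ℝ => p.1 + p.2) =
      gaussianReal 0 (v₁ + v₂) := by
  rcases eq_or_ne v₁ 0 with h | hv₁
  · subst h
    rw [gaussianReal_zero_var, Measure.dirac_prod, Measure.map_map measurable_add
      (measurable_prodMk_left), zero_add]
    have : ((fun p : ℝ × ℝ => p.1 + p.2) ∘ Prod.mk (0:ℝ)) = id := by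
      ext x; simp
    rw [this, Measure.map_id]
  rcases eq_or_ne v₂ 0 with h | hv₂
  · subst h
    rw [gaussianReal_zero_var, Measure.prod_dirac, Measure.map_map measurable_add
      measurable_prodMk_right, add_zero]
    have : ((fun p : ℝ × ℝ => p.1 + p.2) ∘ (fun x : ℝ => (x, (0:ℝ)))) = id := by
      ext x; simp
    rw [this, Measure.map_id]
  have hv : v₁ + v₂ ≠ 0 := by
    simp [hv₁]
  set w : ℝ≥0 := v₁ * v₂ / (v₁ + v₂) with hw
  have hwne : w ≠ 0 := by
    rw [hw]
    exact div_ne_zero (mul_ne_zero hv₁ hv₂) hv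
  ext s hs
  rw [Measure.map_apply measurable_add hs,
    Measure.prod_apply (measurable_add hs)]
  have h1 : ∀ x : ℝ, (Prod.mk x ⁻¹' ((fun p : ℝ × ℝ => p.1 + p.2) ⁻¹' s)) =
      (fun y => x + y) ⁻¹' s := fun x => rfl
  -- inner measure
  have h2 : ∀ x : ℝ, gaussianReal 0 v₂ ((fun y => x + y) ⁻¹' s) =
      ∫⁻ u, s.indicator (fun u => gaussianPDF 0 v₂ (u - x)) u := by
    intro x
    rw [gaussianReal_of_var_ne_zero _ hv₂,
      withDensity_apply _ (measurable_const_add x hs), ← lintegral_indicator (measurable_const_add x hs)]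
    have := lintegral_add_left_eq_self (μ := volume)
      (fun u => Set.indicator s (fun u => gaussianPDF 0 v₂ (u - x)) u) x
    rw [← this]
    congr 1 with y
    by_cases hy : x + y ∈ s
    · simp [Set.indicator_apply, Set.mem_preimage, hy]
    · simp [Set.indicator_apply, Set.mem_preimage, hy]
  simp_rw [h1, h2]
  have hH : Measurable (Function.uncurry fun x u =>
      s.indicator (fun u => gaussianPDF 0 v₂ (u - x)) u) := by
    apply Measurable.indicator
    · exact (measurable_gaussianPDF 0 v₂).comp (measurable_snd.sub measurable_fst)
    · exact measurable_snd hs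
  rw [gaussianReal_of_var_ne_zero _ hv₁,
    lintegral_withDensity_eq_lintegral_mul volume (measurable_gaussianPDF 0 v₁)
      (Measurable.lintegral_prod_right hH)]
  simp only [Pi.mul_apply]
  have hmeas_inner : ∀ x : ℝ, Measurable (fun u => s.indicator
      (fun u => gaussianPDF 0 v₂ (u - x)) u) := fun x =>
    ((measurable_gaussianPDF 0 v₂).comp (measurable_id.sub_const x)).indicator hs
  rw [lintegral_congr fun x => (lintegral_const_mul (μ := volume) _ (hmeas_inner x)).symm]
  rw [lintegral_lintegral_swap (((measurable_gaussianPDF 0 v₁).comp measurable_fst).mul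
    hH).aemeasurable]
  have hpoint : ∀ u : ℝ, (∫⁻ x, gaussianPDF 0 v₁ x *
      s.indicator (fun u => gaussianPDF 0 v₂ (u - x)) u) =
      s.indicator (gaussianPDF 0 (v₁ + v₂)) u := by
    intro u
    by_cases hu : u ∈ s
    · simp only [Set.indicator_of_mem hu]
      have : ∀ x : ℝ, gaussianPDF 0 v₁ x * gaussianPDF 0 v₂ (u - x) =
          gaussianPDF 0 (v₁ + v₂) u * gaussianPDF ((v₁ : ℝ) * u / ((v₁ : ℝ) + v₂)) w x := by
        intro x
        simp only [gaussianPDF]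
        rw [← ENNReal.ofReal_mul (gaussianPDFReal_nonneg _ _ _),
          ← ENNReal.ofReal_mul (gaussianPDFReal_nonneg _ _ _),
          gaussianPDFReal_conv v₁ v₂ hv₁ hv₂ u x]
      simp_rw [this]
      rw [lintegral_const_mul _ (measurable_gaussianPDF _ w),
        lintegral_gaussianPDF_eq_one _ hwne, mul_one]
    · simp only [Set.indicator_of_notMem hu, mul_zero, lintegral_const]
      simp
  simp_rw [hpoint]
  rw [lintegral_indicator hs, gaussianReal_apply _ hv s]

lemma pi_gaussian_proj : ∀ (n : ℕ) (v : Fin n → ℝ),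
    (Measure.pi fun _ : Fin n => gaussianReal 0 1).map (fun z => ∑ i, v i * z i)
      = gaussianReal 0 (Real.toNNReal (∑ i, (v i)^2)) := by
  intro n
  induction n with
  | zero =>
      intro v
      rw [show (fun z : Fin 0 → ℝ => ∑ i, v i * z i) = fun _ => (0:ℝ) by
        funext z; simp]
      rw [Measure.map_const]
      simp
  | succ n ih =>
      intro v
      have hmp := measurePreserving_piFinSuccAbove (fun _ : Fin (n+1) => gaussianReal 0 1) 0
      set e := MeasurableEquiv.piFinSuccAbove (fun _ : Fin (n+1) => ℝ) 0 with he
      have hcomp : (fun z : Fin (n+1) → ℝ => ∑ i, v i * z i) =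
          ((fun p : ℝ × ℝ => p.1 + p.2) ∘
            (Prod.map (fun x : ℝ => v 0 * x) (fun z : Fin n → ℝ => ∑ j, v j.succ * z j))) ∘ e := by
        funext z
        simp only [Function.comp_apply, e, MeasurableEquiv.piFinSuccAbove_apply,
          Fin.insertNthEquiv_symm_apply, Prod.map_apply, Fin.zero_succAbove, Fin.sum_univ_succ,
          Fin.removeNth, Fin.zero_succAbove]
      rw [hcomp, ← Measure.map_map (by fun_prop) e.measurable, hmp.map_eq,
        ← Measure.map_map measurable_add (by fun_prop),
        ← Measure.map_prod_map _ _ (measurable_const_mul _) (by fun_prop),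
        gaussianReal_map_const_mul, ih, mul_zero, gaussianReal_conv]
      congr 1
      apply NNReal.coe_injective
      push_cast
      rw [Real.coe_toNNReal _ (Finset.sum_nonneg fun i _ => sq_nonneg _),
        Real.coe_toNNReal _ (Finset.sum_nonneg fun i _ => sq_nonneg _), Fin.sum_univ_succ]
      ring

lemma stdGaussian_proj {d : ℕ} (w : EuclideanSpace ℝ (Fin d)) :
    (stdGaussian d).map (fun z => (inner ℝ w z : ℝ)) =
      gaussianReal 0 (Real.toNNReal (∑ i, (w i)^2)) := by
  have hmeas : Measurable fun z : EuclideanSpace ℝ (Fin d) => (inner ℝ w z : ℝ) := by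
    exact (continuous_const.inner continuous_id).measurable
  rw [_root_.stdGaussian, Measure.map_map hmeas (MeasurableEquiv.measurable _)]
  have : ((fun z : EuclideanSpace ℝ (Fin d) => (inner ℝ w z : ℝ)) ∘
      (MeasurableEquiv.toLp 2 (Fin d → ℝ))) = fun z : Fin d → ℝ => ∑ i, w i * z i := by
    funext z
    simp [PiLp.inner_apply, mul_comm]
  rw [this, pi_gaussian_proj]

lemma gaussianReal_Icc_le (V : ℝ≥0) (hV : V ≠ 0) (α β : ℝ) :
    gaussianReal 0 V (Set.Icc α β) ≤ ENNReal.ofReal ((Real.sqrt (2 * π * V))⁻¹ * (β - α)) := by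
  rw [gaussianReal_apply _ hV]
  have hb : ∀ x : ℝ, gaussianPDF 0 V x ≤ ENNReal.ofReal ((Real.sqrt (2 * π * V))⁻¹) := by
    intro x
    refine ENNReal.ofReal_le_ofReal ?_
    rw [gaussianPDFReal]
    have h1 : rexp (-(x - 0)^2/(2*(V:ℝ))) ≤ 1 := by
      rw [Real.exp_le_one_iff, neg_div, neg_nonpos]
      positivity
    have h2 : (0:ℝ) ≤ (Real.sqrt (2 * π * V))⁻¹ := by positivity
    calc (Real.sqrt (2 * π * V))⁻¹ * rexp (-(x - 0)^2/(2*(V:ℝ)))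
        ≤ (Real.sqrt (2 * π * V))⁻¹ * 1 := mul_le_mul_of_nonneg_left h1 h2
      _ = (Real.sqrt (2 * π * V))⁻¹ := mul_one _
  calc ∫⁻ x in Set.Icc α β, gaussianPDF 0 V x
      ≤ ∫⁻ _ in Set.Icc α β, ENNReal.ofReal ((Real.sqrt (2 * π * V))⁻¹) :=
        setLIntegral_mono measurable_const fun x _ => hb x
    _ = ENNReal.ofReal ((Real.sqrt (2 * π * V))⁻¹) * volume (Set.Icc α β) :=
        setLIntegral_const _ _
    _ ≤ ENNReal.ofReal ((Real.sqrt (2 * π * V))⁻¹ * (β - α)) := by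
        rw [Real.volume_Icc, ← ENNReal.ofReal_mul (by positivity)]

/-- Softmax weight concentration bound: if `x ∼ (1/N) ∑ᵢ N(t yⁱ, (1-t)² I_d)` with pairwise
distances `‖yⁱ - yʲ‖ ≥ M`, then the probability that all softmax weights
`w_t(x)_i = exp(-½‖(x - t yⁱ)/(1-t)‖²) / ∑ⱼ exp(-½‖(x - t yʲ)/(1-t)‖²)` are at most `τ < 1`
is bounded by `(1/√(2π))·((1-t)/t)·(1/M)·log(τ(N-1)/(1-τ))·N(N-1)`. -/
theorem softmax_concentration_bound {d N : ℕ} (y : Fin N → EuclideanSpace ℝ (Fin d))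
    (M : ℝ) (hM : 0 < M) (hsep : ∀ i j, i ≠ j → M ≤ ‖y i - y j‖)
    (t τ : ℝ) (ht : t ∈ Set.Ioo (0 : ℝ) 1) (hτ : τ ∈ Set.Ioo (0 : ℝ) 1) :
    (∑ i : Fin N, (N : ℝ≥0∞)⁻¹ • isoGaussian (t • y i) (1 - t))
      {x | ∀ i : Fin N,
        Real.exp (-‖(1 - t)⁻¹ • (x - t • y i)‖ ^ 2 / 2) /
          ∑ j, Real.exp (-‖(1 - t)⁻¹ • (x - t • y j)‖ ^ 2 / 2) ≤ τ} ≤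
    ENNReal.ofReal
      ((Real.sqrt (2 * π))⁻¹ * ((1 - t) / t) * M⁻¹ * Real.log (τ * (N - 1) / (1 - τ))
        * (N * (N - 1))) := by
  obtain ⟨ht0, ht1⟩ := ht
  obtain ⟨hτ0, hτ1⟩ := hτ
  have hs : (0:ℝ) < 1 - t := by linarith
  have h1τ : (0:ℝ) < 1 - τ := by linarith
  -- trivial case N = 0
  rcases Nat.eq_zero_or_pos N with hN0 | hN1
  · subst hN0
    simp
  -- case N = 1 : the set is empty
  rcases eq_or_lt_of_le (Nat.succ_le_of_lt hN1) with hN1' | hN2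
  · have hN : N = 1 := hN1'.symm
    subst hN
    have hempty : {x : EuclideanSpace ℝ (Fin d) | ∀ i : Fin 1,
        Real.exp (-‖(1 - t)⁻¹ • (x - t • y i)‖ ^ 2 / 2) /
          ∑ j, Real.exp (-‖(1 - t)⁻¹ • (x - t • y j)‖ ^ 2 / 2) ≤ τ} = ∅ := by
      ext x
      simp only [Set.mem_setOf_eq, Set.mem_empty_iff_false, iff_false, not_forall]
      refine ⟨0, ?_⟩
      rw [Fin.sum_univ_one, div_self (Real.exp_pos _).ne']
      linarith
    rw [hempty]
    simp
  -- main case : N ≥ 2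
  have hN2' : (2:ℝ) ≤ N := by exact_mod_cast hN2
  set L : ℝ := Real.log (τ * (N - 1) / (1 - τ)) with hLdef
  set S : Fin N → Fin N → Set (EuclideanSpace ℝ (Fin d)) := fun k l =>
    (fun x => ‖x - t • y l‖^2 - ‖x - t • y k‖^2) ⁻¹' Set.Icc 0 (2*(1-t)^2*L) with hSdef
  have hScont : ∀ k l : Fin N, Continuous
      (fun x : EuclideanSpace ℝ (Fin d) => ‖x - t • y l‖^2 - ‖x - t • y k‖^2) := by
    intro k l
    exact (((continuous_id.sub continuous_const).norm.pow 2).sub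
      ((continuous_id.sub continuous_const).norm.pow 2))
  have hSmeas : ∀ k l : Fin N, MeasurableSet (S k l) := fun k l =>
    (hScont k l).measurable measurableSet_Icc
  have hnorm : ∀ u : EuclideanSpace ℝ (Fin d),
      ‖(1 - t)⁻¹ • u‖ ^ 2 = ((1-t)⁻¹)^2 * ‖u‖^2 := by
    intro u
    rw [norm_smul, Real.norm_eq_abs, abs_of_pos (inv_pos.2 hs), mul_pow]
  -- inclusion
  have hincl : {x : EuclideanSpace ℝ (Fin d) | ∀ i : Fin N,
      Real.exp (-‖(1 - t)⁻¹ • (x - t • y i)‖ ^ 2 / 2) /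
        ∑ j, Real.exp (-‖(1 - t)⁻¹ • (x - t • y j)‖ ^ 2 / 2) ≤ τ} ⊆
      ⋃ p ∈ (Finset.univ.offDiag : Finset (Fin N × Fin N)), S p.1 p.2 := by
    intro x hx
    simp only [Set.mem_setOf_eq] at hx
    set f : Fin N → ℝ := fun i => Real.exp (-‖(1 - t)⁻¹ • (x - t • y i)‖ ^ 2 / 2) with hfdef
    haveI : Nonempty (Fin N) := Fin.pos_iff_nonempty.1 hN1
    have hfpos : ∀ i, 0 < f i := fun i => Real.exp_pos _
    have hsum : 0 < ∑ j, f j :=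
      Finset.sum_pos (fun j _ => hfpos j) Finset.univ_nonempty
    obtain ⟨k, -, hk⟩ := Finset.exists_max_image Finset.univ f Finset.univ_nonempty
    have herase : (Finset.univ.erase k).Nonempty := by
      rw [← Finset.card_pos, Finset.card_erase_of_mem (Finset.mem_univ k), Finset.card_univ,
        Fintype.card_fin]
      omega
    obtain ⟨l, hl, hlmax⟩ := Finset.exists_max_image (Finset.univ.erase k) f herase
    have hkl : k ≠ l := fun h => (Finset.mem_erase.1 hl).1 h.symm
    have hflk : f l ≤ f k := hk l (Finset.mem_univ l)
    -- sum bound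
    have hcard : ((Finset.univ.erase k).card : ℝ) = (N:ℝ) - 1 := by
      rw [Finset.card_erase_of_mem (Finset.mem_univ k), Finset.card_univ, Fintype.card_fin]
      push_cast [Nat.cast_sub hN1]
      ring
    have hsum_erase : ∑ j ∈ Finset.univ.erase k, f j ≤ ((N:ℝ) - 1) * f l := by
      have := Finset.sum_le_card_nsmul (Finset.univ.erase k) f (f l) (fun j hj => hlmax j hj)
      rwa [nsmul_eq_mul, hcard] at this
    have hxk := hx k
    have hfk : f k ≤ τ * ((∑ j ∈ Finset.univ.erase k, f j) + f k) := by
      have h1 : f k ≤ τ * ∑ j, f j := (div_le_iff₀ hsum).1 hxk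
      rwa [← Finset.sum_erase_add Finset.univ f (Finset.mem_univ k)] at h1
    have hA : (1 - τ) * f k ≤ τ * ((N:ℝ) - 1) * f l := by
      nlinarith [mul_le_mul_of_nonneg_left hsum_erase hτ0.le]
    -- norm consequences
    have hfexp : ∀ i, Real.log (f i) = -(((1-t)⁻¹)^2 * ‖x - t • y i‖^2)/2 := by
      intro i
      rw [hfdef]
      simp only []
      rw [Real.log_exp, hnorm]
    have hmem1 : ‖x - t • y k‖^2 ≤ ‖x - t • y l‖^2 := by
      have h2 := Real.exp_le_exp.1 hflk
      rw [hnorm, hnorm] at h2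
      have hν : (0:ℝ) < ((1-t)⁻¹)^2 := by positivity
      nlinarith
    have hmem2 : ‖x - t • y l‖^2 - ‖x - t • y k‖^2 ≤ 2*(1-t)^2*L := by
      have hratio : f k / f l ≤ τ * ((N:ℝ) - 1) / (1 - τ) := by
        rw [div_le_div_iff₀ (hfpos l) h1τ]
        nlinarith
      have hlog : Real.log (f k / f l) ≤ L := by
        rw [hLdef]
        exact Real.log_le_log (div_pos (hfpos k) (hfpos l)) hratio
      rw [Real.log_div (hfpos k).ne' (hfpos l).ne', hfexp k, hfexp l] at hlog
      have h6 : ‖x - t • y l‖^2 - ‖x - t • y k‖^2 =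
          ((-(((1-t)⁻¹)^2 * ‖x - t • y k‖^2)/2 - -(((1-t)⁻¹)^2 * ‖x - t • y l‖^2)/2) * 2)
            * (1-t)^2 := by
        field_simp
        ring
      rw [h6]
      calc _ ≤ (L * 2) * (1-t)^2 := by
            apply mul_le_mul_of_nonneg_right _ (sq_nonneg _)
            linarith
        _ = 2*(1-t)^2*L := by ring
    have hmemo : ((k,l) : Fin N × Fin N) ∈ (Finset.univ.offDiag : Finset (Fin N × Fin N)) :=
      Finset.mem_offDiag.2 ⟨Finset.mem_univ _, Finset.mem_univ _, hkl⟩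
    exact Set.mem_biUnion hmemo (Set.mem_preimage.2 (Set.mem_Icc.2 ⟨by linarith, by linarith⟩))
  -- per-component slab bound
  have hkey : ∀ (i k l : Fin N), k ≠ l →
      isoGaussian (t • y i) (1 - t) (S k l) ≤
        ENNReal.ofReal ((Real.sqrt (2 * π))⁻¹ * ((1 - t) / t) * M⁻¹ * L) := by
    intro i k l hkl
    set w := y k - y l with hwdef
    have hwM : M ≤ ‖w‖ := hsep k l hkl
    have hwpos : (0:ℝ) < ‖w‖ := lt_of_lt_of_le hM hwM
    set c := 2 * t * (1 - t) with hcdef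
    have hc : 0 < c := by rw [hcdef]; positivity
    set B := t^2 * (‖y i - y l‖^2 - ‖y i - y k‖^2) with hBdef
    have hF : ∀ z : EuclideanSpace ℝ (Fin d),
        ‖(t • y i + (1 - t) • z) - t • y l‖^2 - ‖(t • y i + (1 - t) • z) - t • y k‖^2
          = c * (inner ℝ w z : ℝ) + B := by
      intro z
      have e1 : t • y i + (1 - t) • z - t • y l = t • (y i - y l) + (1 - t) • z := by module
      have e2 : t • y i + (1 - t) • z - t • y k = t • (y i - y k) + (1 - t) • z := by module
      have e3 : (inner ℝ w z : ℝ) = inner ℝ (y i - y l) z - inner ℝ (y i - y k) z := by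
        rw [← inner_sub_left]
        congr 1
        rw [hwdef]
        abel
      rw [e1, e2, norm_add_sq_real, norm_add_sq_real]
      simp only [real_inner_smul_left, real_inner_smul_right, norm_smul, Real.norm_eq_abs,
        abs_of_pos ht0, abs_of_pos hs]
      rw [e3, hBdef, hcdef]
      ring
    have hAff : Measurable fun z : EuclideanSpace ℝ (Fin d) => t • y i + (1 - t) • z :=
      measurable_const.add (by fun_prop)
    have hInner : Measurable fun z : EuclideanSpace ℝ (Fin d) => (inner ℝ w z : ℝ) := by
      exact (continuous_const.inner continuous_id).measurable
    have hset : (fun z : EuclideanSpace ℝ (Fin d) => t • y i + (1 - t) • z) ⁻¹' S k l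
        = (fun z => (inner ℝ w z : ℝ)) ⁻¹' Set.Icc ((0 - B)/c) ((2*(1-t)^2*L - B)/c) := by
      ext z
      simp only [Set.mem_preimage, hSdef, Set.mem_Icc]
      rw [hF z]
      constructor
      · rintro ⟨h1, h2⟩
        constructor
        · rw [div_le_iff₀ hc]; linarith
        · rw [le_div_iff₀ hc]; linarith
      · rintro ⟨h1, h2⟩
        rw [div_le_iff₀ hc] at h1
        rw [le_div_iff₀ hc] at h2
        constructor <;> linarith
    set V : ℝ≥0 := Real.toNNReal (∑ j, (w j)^2) with hVdef
    have hVr : (V : ℝ) = ‖w‖^2 := by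
      rw [hVdef, Real.coe_toNNReal _ (Finset.sum_nonneg fun j _ => sq_nonneg _),
        EuclideanSpace.norm_eq, Real.sq_sqrt (Finset.sum_nonneg fun j _ => sq_nonneg _)]
      simp [sq_abs]
    have hVne : V ≠ 0 := by
      intro h
      rw [h] at hVr
      simp only [NNReal.coe_zero] at hVr
      nlinarith
    calc isoGaussian (t • y i) (1 - t) (S k l)
        = stdGaussian d ((fun z => t • y i + (1 - t) • z) ⁻¹' S k l) := by
          rw [isoGaussian, Measure.map_apply hAff (hSmeas k l)]
      _ = gaussianReal 0 V (Set.Icc ((0 - B)/c) ((2*(1-t)^2*L - B)/c)) := by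
          rw [hset, ← Measure.map_apply hInner measurableSet_Icc, stdGaussian_proj w]
      _ ≤ ENNReal.ofReal ((Real.sqrt (2 * π * V))⁻¹ * ((2*(1-t)^2*L - B)/c - (0 - B)/c)) :=
          gaussianReal_Icc_le V hVne _ _
      _ ≤ ENNReal.ofReal ((Real.sqrt (2 * π))⁻¹ * ((1 - t) / t) * M⁻¹ * L) := by
          have hdiff : (2*(1-t)^2*L - B)/c - (0 - B)/c = (1-t)/t*L := by
            rw [hcdef]
            field_simp
            ring
          have hsqrt : Real.sqrt (2 * π * V) = Real.sqrt (2*π) * ‖w‖ := by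
            rw [hVr, Real.sqrt_mul (by positivity), Real.sqrt_sq (norm_nonneg w)]
          rw [hdiff, hsqrt, mul_inv]
          rcases le_or_gt 0 L with hL0 | hL0
          · apply ENNReal.ofReal_le_ofReal
            have hinv : ‖w‖⁻¹ ≤ M⁻¹ := by
              rw [inv_le_inv₀ hwpos hM]
              exact hwM
            have hnn : 0 ≤ (Real.sqrt (2*π))⁻¹ * ((1-t)/t) * L :=
              mul_nonneg (mul_nonneg (inv_nonneg.2 (Real.sqrt_nonneg _))
                (div_nonneg hs.le ht0.le)) hL0
            calc (Real.sqrt (2*π))⁻¹ * ‖w‖⁻¹ * ((1-t)/t*L)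
                = ((Real.sqrt (2*π))⁻¹ * ((1-t)/t) * L) * ‖w‖⁻¹ := by ring
              _ ≤ ((Real.sqrt (2*π))⁻¹ * ((1-t)/t) * L) * M⁻¹ :=
                  mul_le_mul_of_nonneg_left hinv hnn
              _ = (Real.sqrt (2*π))⁻¹ * ((1-t)/t) * M⁻¹ * L := by ring
          · have hneg : (Real.sqrt (2*π))⁻¹ * ‖w‖⁻¹ * ((1-t)/t*L) ≤ 0 := by
              apply mul_nonpos_iff.2
              refine Or.inl ⟨by positivity, ?_⟩
              exact mul_nonpos_iff.2 (Or.inl ⟨div_nonneg hs.le ht0.le, hL0.le⟩)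
            rw [ENNReal.ofReal_of_nonpos hneg]
            exact zero_le
  -- assemble
  set T := ENNReal.ofReal ((Real.sqrt (2 * π))⁻¹ * ((1 - t) / t) * M⁻¹ * L) with hTdef
  have hμS : ∀ k l : Fin N, k ≠ l →
      (∑ i : Fin N, (N : ℝ≥0∞)⁻¹ • isoGaussian (t • y i) (1 - t)) (S k l) ≤ T := by
    intro k l hkl
    rw [Measure.finset_sum_apply]
    calc ∑ i : Fin N, ((N : ℝ≥0∞)⁻¹ • isoGaussian (t • y i) (1 - t)) (S k l)
        = ∑ i : Fin N, (N : ℝ≥0∞)⁻¹ * isoGaussian (t • y i) (1 - t) (S k l) := by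
          simp [Measure.smul_apply, smul_eq_mul]
      _ ≤ ∑ _i : Fin N, (N : ℝ≥0∞)⁻¹ * T :=
          Finset.sum_le_sum fun i _ => mul_le_mul_right (hkey i k l hkl) _
      _ = (N : ℝ≥0∞) * ((N : ℝ≥0∞)⁻¹ * T) := by
          rw [Finset.sum_const, Finset.card_univ, Fintype.card_fin, nsmul_eq_mul]
      _ = T := by
          rw [← mul_assoc, ENNReal.mul_inv_cancel (by exact_mod_cast hN1.ne')
            (ENNReal.natCast_ne_top N), one_mul]
  refine le_trans (measure_mono hincl) ?_
  refine le_trans (measure_biUnion_finset_le _ _) ?_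
  refine le_trans (Finset.sum_le_sum fun p hp => hμS p.1 p.2 (Finset.mem_offDiag.1 hp).2.2) ?_
  rw [Finset.sum_const, Finset.offDiag_card, Finset.card_univ, Fintype.card_fin]
  rcases le_or_gt 0 ((Real.sqrt (2 * π))⁻¹ * ((1 - t) / t) * M⁻¹ * L) with hCL | hCL
  · rw [nsmul_eq_mul, hTdef,
      show ((N*N - N : ℕ) : ℝ≥0∞) = ENNReal.ofReal ((N*N - N : ℕ) : ℝ) from
        (ENNReal.ofReal_natCast _).symm,
      ← ENNReal.ofReal_mul (by positivity)]
    apply ENNReal.ofReal_le_ofReal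
    have hc2 : ((N*N - N : ℕ) : ℝ) = (N:ℝ)*(N:ℝ) - N := by
      push_cast [Nat.cast_sub (Nat.le_mul_of_pos_left N hN1)]
      ring
    rw [hc2]
    have : ((N:ℝ)*(N:ℝ) - N) * ((Real.sqrt (2 * π))⁻¹ * ((1 - t) / t) * M⁻¹ * L) =
        (Real.sqrt (2 * π))⁻¹ * ((1 - t) / t) * M⁻¹ * L * ((N:ℝ) * ((N:ℝ) - 1)) := by
      ring
    rw [this]
  · have hT0 : T = 0 := by rw [hTdef, ENNReal.ofReal_of_nonpos hCL.le]
    rw [hT0, smul_zero]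
    exact zero_le
end

section
/- For bounded closed convex sets S, C₁, C₂ ⊆ ℝ^d, the set T = {t ∈ [0,1] : dist((1-t)S + tC₁, (1-t)S + tC₂) = 0} is a closed interval containing 0; in particular if C₁ and C₂ are disjoint then T is a closed interval not containing 1, so there exists t* < 1 with (1-t)S + tC₁ and (1-t)S + tC₂ disjoint for all t ∈ (t*, 1]. -/
set_option maxHeartbeats 1000000

open scoped Pointwise

/-- The distance between two sets: `dist(A, B) = inf {‖a - b‖ : a ∈ A, b ∈ B}`. -/
noncomputable def setDist {d : ℕ} (A B : Set (EuclideanSpace ℝ (Fin d))) : ℝ :=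
  sInf (Set.image2 dist A B)

lemma setDist_eq_zero_of_inter {d : ℕ} {A B : Set (EuclideanSpace ℝ (Fin d))}
    (h : (A ∩ B).Nonempty) : setDist A B = 0 := by
  obtain ⟨x, hxA, hxB⟩ := h
  have h0 : (0 : ℝ) ∈ Set.image2 dist A B := ⟨x, hxA, x, hxB, dist_self x⟩
  have hbdd : BddBelow (Set.image2 dist A B) := by
    refine ⟨0, ?_⟩
    rintro y ⟨a, _, b, _, rfl⟩
    exact dist_nonneg
  refine le_antisymm (csInf_le hbdd h0) (le_csInf ⟨0, h0⟩ ?_)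
  rintro y ⟨a, _, b, _, rfl⟩
  exact dist_nonneg

lemma inter_nonempty_of_sInf_image2_dist_eq_zero {E : Type*} [MetricSpace E] {A B : Set E}
    (hAc : IsCompact A) (hAne : A.Nonempty) (hBc : IsCompact B) (hBne : B.Nonempty)
    (h : sInf (Set.image2 dist A B) = 0) : (A ∩ B).Nonempty := by
  obtain ⟨p, hp, hmin⟩ := (hAc.prod hBc).exists_isMinOn (hAne.prod hBne)
    (continuous_dist.continuousOn (s := A ×ˢ B))
  have hmem : dist p.1 p.2 ∈ Set.image2 dist A B := ⟨p.1, hp.1, p.2, hp.2, rfl⟩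
  have hge : dist p.1 p.2 ≤ sInf (Set.image2 dist A B) := by
    refine le_csInf ⟨_, hmem⟩ ?_
    rintro y ⟨a, ha, b, hb, rfl⟩
    exact hmin (Set.mk_mem_prod ha hb)
  have hzero : dist p.1 p.2 = 0 := le_antisymm (by rw [← h]; exact hge) dist_nonneg
  refine ⟨p.1, hp.1, ?_⟩
  rw [dist_eq_zero.mp hzero]
  exact hp.2

lemma inter_nonempty_of_setDist_eq_zero {d : ℕ} {A B : Set (EuclideanSpace ℝ (Fin d))}
    (hAc : IsCompact A) (hAne : A.Nonempty) (hBc : IsCompact B) (hBne : B.Nonempty)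
    (h : setDist A B = 0) : (A ∩ B).Nonempty := by
  unfold setDist at h
  exact inter_nonempty_of_sInf_image2_dist_eq_zero hAc hAne hBc hBne h

lemma combo_eq {d : ℕ} {S C : Set (EuclideanSpace ℝ (Fin d))}
    (hS : Convex ℝ S) (hC : Convex ℝ C) {u v a b : ℝ}
    (hu : u ∈ Set.Icc (0 : ℝ) 1) (hv : v ∈ Set.Icc (0 : ℝ) 1)
    (ha : 0 ≤ a) (hb : 0 ≤ b) (hab : a + b = 1) :
    a • ((1 - u) • S + u • C) + b • ((1 - v) • S + v • C)
      = (1 - (a * u + b * v)) • S + (a * u + b * v) • C := by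
  rw [smul_add, smul_add, smul_smul, smul_smul, smul_smul, smul_smul]
  have h1 : (1 : ℝ) - (a * u + b * v) = a * (1 - u) + b * (1 - v) := by
    linear_combination -(1:ℝ) * hab
  rw [h1, hS.add_smul (mul_nonneg ha (sub_nonneg.mpr hu.2))
      (mul_nonneg hb (sub_nonneg.mpr hv.2)),
    hC.add_smul (mul_nonneg ha hu.1) (mul_nonneg hb hv.1)]
  exact add_add_add_comm _ _ _ _

/-- For nonempty compact convex `S, C₁, C₂ ⊆ ℝ^d` with `C₁` and `C₂` disjoint, the set
`T = {t ∈ [0,1] : dist((1-t)S + tC₁, (1-t)S + tC₂) = 0}` is a closed interval containing `0`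
and not containing `1`; consequently there is `t* < 1` such that `(1-t)S + tC₁` and
`(1-t)S + tC₂` are disjoint for all `t ∈ (t*, 1]`. -/
theorem separation_time_exists {d : ℕ} (S C₁ C₂ : Set (EuclideanSpace ℝ (Fin d)))
    (hS : S.Nonempty) (hSc : IsCompact S) (hSconv : Convex ℝ S)
    (hC₁ : C₁.Nonempty) (hC₁c : IsCompact C₁) (hC₁conv : Convex ℝ C₁)
    (hC₂ : C₂.Nonempty) (hC₂c : IsCompact C₂) (hC₂conv : Convex ℝ C₂)
    (hdisj : Disjoint C₁ C₂) :
    (0 : ℝ) ∈ {t : ℝ | t ∈ Set.Icc (0 : ℝ) 1 ∧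
        setDist ((1 - t) • S + t • C₁) ((1 - t) • S + t • C₂) = 0} ∧
    (∃ a b : ℝ, {t : ℝ | t ∈ Set.Icc (0 : ℝ) 1 ∧
        setDist ((1 - t) • S + t • C₁) ((1 - t) • S + t • C₂) = 0} = Set.Icc a b) ∧
    (1 : ℝ) ∉ {t : ℝ | t ∈ Set.Icc (0 : ℝ) 1 ∧
        setDist ((1 - t) • S + t • C₁) ((1 - t) • S + t • C₂) = 0} ∧
    ∃ tstar : ℝ, tstar < 1 ∧ ∀ t ∈ Set.Ioc tstar 1,
        Disjoint ((1 - t) • S + t • C₁) ((1 - t) • S + t • C₂) := by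
  set T : Set ℝ := {t : ℝ | t ∈ Set.Icc (0 : ℝ) 1 ∧
      setDist ((1 - t) • S + t • C₁) ((1 - t) • S + t • C₂) = 0} with hTdef
  -- basic compactness / nonemptiness of the moving sets
  have hAc : ∀ t : ℝ, IsCompact ((1 - t) • S + t • C₁) :=
    fun t => (hSc.smul (1 - t)).add (hC₁c.smul t)
  have hBc : ∀ t : ℝ, IsCompact ((1 - t) • S + t • C₂) :=
    fun t => (hSc.smul (1 - t)).add (hC₂c.smul t)
  have hAne : ∀ t : ℝ, ((1 - t) • S + t • C₁).Nonempty :=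
    fun t => (hS.smul_set).add (hC₁.smul_set)
  have hBne : ∀ t : ℝ, ((1 - t) • S + t • C₂).Nonempty :=
    fun t => (hS.smul_set).add (hC₂.smul_set)
  have hmemT : ∀ t : ℝ, t ∈ T ↔ t ∈ Set.Icc (0 : ℝ) 1 ∧
      (((1 - t) • S + t • C₁) ∩ ((1 - t) • S + t • C₂)).Nonempty := by
    intro t
    constructor
    · rintro ⟨ht, hd⟩
      exact ⟨ht, inter_nonempty_of_setDist_eq_zero (hAc t) (hAne t) (hBc t) (hBne t) hd⟩
    · rintro ⟨ht, hne⟩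
      exact ⟨ht, setDist_eq_zero_of_inter hne⟩
  -- 0 ∈ T
  have h0T : (0 : ℝ) ∈ T := by
    have e1 : (1 - (0 : ℝ)) • S + (0 : ℝ) • C₁ = S := by
      rw [Set.zero_smul_set hC₁, sub_zero, one_smul, add_zero]
    have e2 : (1 - (0 : ℝ)) • S + (0 : ℝ) • C₂ = S := by
      rw [Set.zero_smul_set hC₂, sub_zero, one_smul, add_zero]
    refine ⟨Set.left_mem_Icc.mpr zero_le_one, ?_⟩
    rw [e1, e2]
    obtain ⟨s, hs⟩ := hS
    exact setDist_eq_zero_of_inter ⟨s, hs, hs⟩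
  -- 1 ∉ T
  have h1T : (1 : ℝ) ∉ T := by
    rintro ⟨-, hd⟩
    have e1 : (1 - (1 : ℝ)) • S + (1 : ℝ) • C₁ = C₁ := by
      rw [sub_self, Set.zero_smul_set hS, one_smul, zero_add]
    have e2 : (1 - (1 : ℝ)) • S + (1 : ℝ) • C₂ = C₂ := by
      rw [sub_self, Set.zero_smul_set hS, one_smul, zero_add]
    rw [e1, e2] at hd
    obtain ⟨x, hx₁, hx₂⟩ :=
      inter_nonempty_of_setDist_eq_zero hC₁c hC₁ hC₂c hC₂ hd
    exact Set.disjoint_iff.mp hdisj ⟨hx₁, hx₂⟩ 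
  -- T is convex
  have hTconv : Convex ℝ T := by
    intro u hu v hv a b ha hb hab
    simp only [smul_eq_mul]
    obtain ⟨huI, hune⟩ := (hmemT u).mp hu
    obtain ⟨hvI, hvne⟩ := (hmemT v).mp hv
    obtain ⟨x, hx₁, hx₂⟩ := hune
    obtain ⟨y, hy₁, hy₂⟩ := hvne
    refine (hmemT _).mpr ⟨⟨add_nonneg (mul_nonneg ha huI.1) (mul_nonneg hb hvI.1), ?_⟩,
      ⟨a • x + b • y, ?_, ?_⟩⟩
    · calc a * u + b * v ≤ a * 1 + b * 1 := by
            apply add_le_add (mul_le_mul_of_nonneg_left huI.2 ha)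
              (mul_le_mul_of_nonneg_left hvI.2 hb)
        _ = 1 := by rw [mul_one, mul_one, hab]
    · rw [← combo_eq hSconv hC₁conv huI hvI ha hb hab]
      exact Set.add_mem_add (Set.smul_mem_smul_set hx₁) (Set.smul_mem_smul_set hy₁)
    · rw [← combo_eq hSconv hC₂conv huI hvI ha hb hab]
      exact Set.add_mem_add (Set.smul_mem_smul_set hx₂) (Set.smul_mem_smul_set hy₂)
  -- T is compact, via a projection of a compact set
  have hTc : IsCompact T := by
    set F : ℝ × (EuclideanSpace ℝ (Fin d) × EuclideanSpace ℝ (Fin d)) →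
        ℝ × EuclideanSpace ℝ (Fin d) :=
      fun p => (p.1, (1 - p.1) • p.2.1 + p.1 • p.2.2) with hF
    have hFc : Continuous F := by fun_prop
    have hK1 : IsCompact (F '' (Set.Icc (0:ℝ) 1 ×ˢ S ×ˢ C₁)) :=
      (isCompact_Icc.prod (hSc.prod hC₁c)).image hFc
    have hK2 : IsCompact (F '' (Set.Icc (0:ℝ) 1 ×ˢ S ×ˢ C₂)) :=
      (isCompact_Icc.prod (hSc.prod hC₂c)).image hFc
    have hTK : T = Prod.fst '' ((F '' (Set.Icc (0:ℝ) 1 ×ˢ S ×ˢ C₁)) ∩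
        (F '' (Set.Icc (0:ℝ) 1 ×ˢ S ×ˢ C₂))) := by
      ext t
      constructor
      · intro ht
        obtain ⟨htI, x, hx₁, hx₂⟩ := (hmemT t).mp ht
        obtain ⟨y₁, hy₁, z₁, hz₁, hyz₁⟩ := Set.mem_add.mp hx₁
        obtain ⟨s₁, hs₁, rfl⟩ := hy₁
        obtain ⟨c₁, hc₁, rfl⟩ := hz₁
        obtain ⟨y₂, hy₂, z₂, hz₂, hyz₂⟩ := Set.mem_add.mp hx₂
        obtain ⟨s₂, hs₂, rfl⟩ := hy₂
        obtain ⟨c₂, hc₂, rfl⟩ := hz₂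
        refine ⟨(t, x), ⟨⟨(t, s₁, c₁), ⟨htI, hs₁, hc₁⟩, ?_⟩,
          ⟨(t, s₂, c₂), ⟨htI, hs₂, hc₂⟩, ?_⟩⟩, rfl⟩
        · simp only [hF, Prod.mk.injEq]
          exact ⟨trivial, hyz₁⟩
        · simp only [hF, Prod.mk.injEq]
          exact ⟨trivial, hyz₂⟩
      · rintro ⟨⟨t', x⟩, ⟨⟨⟨t₁, s₁, c₁⟩, ⟨ht₁, hs₁, hc₁⟩, he₁⟩,
          ⟨⟨t₂, s₂, c₂⟩, ⟨ht₂, hs₂, hc₂⟩, he₂⟩⟩, rfl⟩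
        simp only [hF, Prod.mk.injEq] at he₁ he₂
        obtain ⟨rfl, hx₁⟩ := he₁
        obtain ⟨rfl, hx₂⟩ := he₂
        refine (hmemT _).mpr ⟨ht₁, ⟨x, ?_, ?_⟩⟩
        · rw [← hx₁]
          exact Set.add_mem_add (Set.smul_mem_smul_set hs₁) (Set.smul_mem_smul_set hc₁)
        · rw [← hx₂]
          exact Set.add_mem_add (Set.smul_mem_smul_set hs₂) (Set.smul_mem_smul_set hc₂)
    rw [hTK]
    exact ((hK1.inter_right hK2.isClosed).image continuous_fst)
  have hTne : T.Nonempty := ⟨0, h0T⟩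
  have hIcc : T = Set.Icc (sInf T) (sSup T) :=
    eq_Icc_of_connected_compact ⟨hTne, hTconv.isPreconnected⟩ hTc
  have hsupT : sSup T ∈ T := by
    have h' : sSup T ∈ Set.Icc (sInf T) (sSup T) :=
      Set.right_mem_Icc.mpr (csInf_le_csSup hTne hTc.bddBelow hTc.bddAbove)
    rwa [← hIcc] at h'
  have hsup_lt : sSup T < 1 := by
    rcases lt_or_eq_of_le hsupT.1.2 with h | h
    · exact h
    · exact absurd (h ▸ hsupT) h1T
  refine ⟨h0T, ⟨sInf T, sSup T, hIcc⟩, h1T, sSup T, hsup_lt, ?_⟩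
  intro t ht
  by_contra hcon
  obtain ⟨x, hx₁, hx₂⟩ := Set.not_disjoint_iff.mp hcon
  have h0le : (0 : ℝ) ≤ sSup T := le_csSup hTc.bddAbove h0T
  have htT : t ∈ T := ⟨⟨le_of_lt (lt_of_le_of_lt h0le ht.1), ht.2⟩,
    setDist_eq_zero_of_inter ⟨x, hx₁, hx₂⟩⟩
  exact absurd (le_csSup hTc.bddAbove htT) (not_le.mpr ht.1)
end
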